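/- Suppose X has E[X] = 0, E[X^2] = 1, and E[X(X - s)1{X ≤ s}] = P(X ≤ s) for all s ∈ ℝ. Then X has the standard normal distribution. -/

import Mathlib

open MeasureTheory ProbabilityTheory Real Set Filter Topology
open scoped ENNReal NNReal

lemma fubini_step (ν : Measure ℝ) [IsProbabilityMeasure ν]
    (hInt1 : Integrable (fun x => x) ν)
    (hInt2 : Integrable (fun x => x ^ 2) ν) (s : ℝ) :
    IntegrableOn (fun t => -∫ x in Iio t, x ∂ν) (Iio s) volume ∧
    ∫ t in Iio s, (-∫ x in Iio t, x ∂ν) ∂volume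
      = ∫ x, (if x ≤ s then x * (x - s) else 0) ∂ν := by
  set K : ℝ → ℝ → ℝ := fun x t => if x < t ∧ t < s then -x else 0 with hK
  have hKmeas : Measurable (Function.uncurry K) := by
    have hset : MeasurableSet {p : ℝ × ℝ | p.1 < p.2 ∧ p.2 < s} :=
      (measurableSet_lt measurable_fst measurable_snd).inter
        (measurable_snd measurableSet_Iio)
    exact Measurable.ite hset measurable_fst.neg measurable_const
  have hKind : ∀ x, K x = (Ioo x s).indicator (fun _ => -x) := by
    intro x; funext t; simp [hK, Set.indicator_apply, Set.mem_Ioo]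
  have hKint : Integrable (Function.uncurry K) (ν.prod volume) := by
    rw [integrable_prod_iff hKmeas.aestronglyMeasurable]
    constructor
    · refine Eventually.of_forall fun x => ?_
      rw [show (fun y => Function.uncurry K (x, y)) = K x from rfl, hKind x]
      rw [integrable_indicator_iff measurableSet_Ioo]
      exact integrableOn_const measure_Ioo_lt_top.ne
    · have hval : ∀ x : ℝ, (∫ t, ‖Function.uncurry K (x, t)‖ ∂volume)
          = max (s - x) 0 * |x| := by
        intro x
        rw [show (fun t => ‖Function.uncurry K (x, t)‖) = (Ioo x s).indicator (fun _ => |x|) by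
          funext t; simp only [Function.uncurry, hKind x]
          by_cases h : t ∈ Ioo x s <;> simp [h]]
        rw [integral_indicator measurableSet_Ioo, setIntegral_const, smul_eq_mul,
          measureReal_def, Real.volume_Ioo, ENNReal.toReal_ofReal']
      have hbound : Integrable (fun x : ℝ => |x| * |s| + x ^ 2) ν :=
        (hInt1.norm.mul_const |s|).add hInt2
      refine hbound.mono ?_ ?_
      · rw [show (fun x : ℝ => ∫ t, ‖Function.uncurry K (x, t)‖ ∂volume)
            = fun x => max (s - x) 0 * |x| from funext hval]
        exact Continuous.aestronglyMeasurable (by fun_prop)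
      · refine Eventually.of_forall fun x => ?_
        rw [hval x, Real.norm_eq_abs, Real.norm_eq_abs]
        have h1 : max (s - x) 0 ≤ |s| + |x| := by
          refine max_le ?_ (by positivity)
          calc s - x ≤ |s - x| := le_abs_self _
            _ ≤ |s| + |x| := abs_sub _ _
        have h2 : (0:ℝ) ≤ |x| * |s| + x ^ 2 := by positivity
        rw [abs_of_nonneg (mul_nonneg (le_max_right _ _) (abs_nonneg x)),
          abs_of_nonneg h2]
        nlinarith [abs_nonneg x, sq_abs x, le_max_right (s - x) (0:ℝ)]
  have hinner1 : ∀ x, (∫ t, K x t ∂volume) = (if x ≤ s then x * (x - s) else 0) := by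
    intro x
    rw [hKind x, integral_indicator measurableSet_Ioo, setIntegral_const, smul_eq_mul,
      measureReal_def, Real.volume_Ioo, ENNReal.toReal_ofReal']
    rcases le_or_gt x s with h | h
    · rw [if_pos h, max_eq_left (by linarith)]; ring
    · rw [if_neg (not_le.2 h), max_eq_right (by linarith)]; ring
  have hinner2 : ∀ t, (∫ x, K x t ∂ν)
      = (Iio s).indicator (fun t => -∫ x in Iio t, x ∂ν) t := by
    intro t
    by_cases ht : t < s
    · rw [Set.indicator_of_mem (mem_Iio.mpr ht)]
      rw [show (fun x => K x t) = fun x => (Iio t).indicator (fun x => -x) x by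
        funext x; simp [hK, Set.indicator_apply, ht]]
      rw [integral_indicator measurableSet_Iio]
      exact integral_neg _
    · rw [Set.indicator_of_notMem (by simpa using ht)]
      rw [show (fun x => K x t) = fun _ => (0:ℝ) by
        funext x; simp [hK, ht]]
      exact integral_zero _ _
  constructor
  · have := hKint.integral_prod_right
    rw [show (fun y => ∫ x, Function.uncurry K (x, y) ∂ν)
        = (Iio s).indicator (fun t => -∫ x in Iio t, x ∂ν) from funext hinner2] at this
    exact (integrable_indicator_iff measurableSet_Iio).1 this
  · have hswap := integral_integral_swap hKint
    simp only [hinner1, hinner2] at hswap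
    rw [integral_indicator measurableSet_Iio] at hswap
    exact hswap.symm

lemma gm_nonneg (ν : Measure ℝ) [IsProbabilityMeasure ν]
    (hInt1 : Integrable (fun x => x) ν) (hmean : ∫ x, x ∂ν = 0) (t : ℝ) :
    0 ≤ -∫ x in Iio t, x ∂ν := by
  rcases le_or_gt t 0 with ht | ht
  · have : ∫ x in Iio t, x ∂ν ≤ 0 := by
      refine setIntegral_nonpos measurableSet_Iio fun x hx => ?_
      exact le_trans (le_of_lt hx) ht
    linarith
  · have hsplit : (∫ x in Iio t, x ∂ν) + ∫ x in (Iio t)ᶜ, x ∂ν = ∫ x, x ∂ν :=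
      integral_add_compl measurableSet_Iio hInt1
    have hpos : 0 ≤ ∫ x in (Iio t)ᶜ, x ∂ν := by
      rw [compl_Iio]
      exact setIntegral_nonneg measurableSet_Ici fun x hx => le_trans ht.le hx
    rw [hmean] at hsplit
    linarith

lemma no_atoms (ν : Measure ℝ) [IsProbabilityMeasure ν]
    (hInt1 : Integrable (fun x => x) ν) (hInt2 : Integrable (fun x => x ^ 2) ν)
    (hF : ∀ s : ℝ, (ν (Iic s)).toReal = ∫ t in Iio s, (-∫ x in Iio t, x ∂ν) ∂volume)
    (a : ℝ) : ν {a} = 0 := by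
  set gm : ℝ → ℝ := fun t => -∫ x in Iio t, x ∂ν with hgm
  have hFi : ∀ s, IntegrableOn gm (Iio s) volume := fun s => (fubini_step ν hInt1 hInt2 s).1
  set u : ℕ → ℝ := fun n => a - 1 / (n + 1) with hu
  have hu_mono : Monotone u := by
    intro n m hnm
    have h1 : (0:ℝ) < n + 1 := by positivity
    have h2 : (n:ℝ) + 1 ≤ (m:ℝ) + 1 := by exact_mod_cast by omega
    have := one_div_le_one_div_of_le h1 h2
    simp only [hu]; linarith
  have hu_lt : ∀ n, u n < a := fun n => by
    have : (0:ℝ) < 1 / (n + 1) := by positivity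
    simp only [hu]; linarith
  have hIic : (⋃ n, Iic (u n)) = Iio a := by
    ext x
    simp only [mem_iUnion, mem_Iic, mem_Iio]
    constructor
    · rintro ⟨n, hn⟩; exact lt_of_le_of_lt hn (hu_lt n)
    · intro hx
      obtain ⟨n, hn⟩ := exists_nat_one_div_lt (by linarith : (0:ℝ) < a - x)
      exact ⟨n, by simp only [hu]; linarith⟩
  have hIio : (⋃ n, Iio (u n)) = Iio a := by
    ext x
    simp only [mem_iUnion, mem_Iio]
    constructor
    · rintro ⟨n, hn⟩; exact lt_trans hn (hu_lt n)
    · intro hx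
      obtain ⟨n, hn⟩ := exists_nat_one_div_lt (by linarith : (0:ℝ) < a - x)
      exact ⟨n, by simp only [hu]; linarith⟩
  have h1 : Tendsto (fun n => ν (Iic (u n))) atTop (𝓝 (ν (Iio a))) := by
    rw [← hIic]
    exact tendsto_measure_iUnion_atTop fun n m hnm => Iic_subset_Iic.2 (hu_mono hnm)
  have h2 : Tendsto (fun n => ∫ t in Iio (u n), gm t) atTop (𝓝 (∫ t in Iio a, gm t)) := by
    have := tendsto_setIntegral_of_monotone (f := gm) (μ := volume)
      (s := fun n => Iio (u n)) (fun n => measurableSet_Iio)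
      (fun n m hnm => Iio_subset_Iio (hu_mono hnm)) (by rw [hIio]; exact hFi a)
    rwa [hIio] at this
  have h1' : Tendsto (fun n => (ν (Iic (u n))).toReal) atTop (𝓝 ((ν (Iio a)).toReal)) :=
    (ENNReal.tendsto_toReal (measure_ne_top ν _)).comp h1
  have key : (ν (Iio a)).toReal = ∫ t in Iio a, gm t := by
    refine tendsto_nhds_unique ?_ h2
    simpa only [hF] using h1'
  have heq : ν (Iio a) = ν (Iic a) := by
    rw [← ENNReal.ofReal_toReal (measure_ne_top ν (Iio a)),
      ← ENNReal.ofReal_toReal (measure_ne_top ν (Iic a)), key, hF a]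
  have hsplit : ν (Iic a) = ν (Iio a) + ν {a} := by
    rw [← Iio_union_right, measure_union (by simp) (measurableSet_singleton a)]
  have : ν (Iio a) + 0 = ν (Iio a) + ν {a} := by
    rw [add_zero, ← hsplit, heq]
  exact ((ENNReal.add_right_inj (measure_ne_top ν (Iio a))).mp this).symm

lemma key (ν : Measure ℝ) [IsProbabilityMeasure ν]
    (hInt1 : Integrable (fun x => x) ν)
    (hInt2 : Integrable (fun x => x ^ 2) ν)
    (hmean : ∫ x, x ∂ν = 0)
    (hfix : ∀ s : ℝ, ∫ x, (if x ≤ s then x * (x - s) else 0) ∂ν = (ν (Iic s)).toReal) :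
    ν = gaussianReal 0 1 := by
  have hF : ∀ s : ℝ, (ν (Iic s)).toReal
      = ∫ t in Iio s, (-∫ x in Iio t, x ∂ν) ∂volume := fun s => by
    rw [← hfix s, ← (fubini_step ν hInt1 hInt2 s).2]
  haveI : NullSingletonClass ν := ⟨no_atoms ν hInt1 hInt2 hF⟩
  set g : ℝ → ℝ := fun t => -∫ x in Iic t, x ∂ν with hg
  have hg_eq : ∀ t, g t = -∫ x in Iio t, x ∂ν := by
    intro t
    simp only [hg, neg_inj]
    exact (setIntegral_congr_set Iio_ae_eq_Iic).symm
  -- continuity of g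
  have hg_cont : Continuous g := by
    rw [continuous_iff_continuousAt]
    intro a
    have hrepr : g = fun t => -∫ x, (Iic t).indicator (fun x => x) x ∂ν := by
      funext t
      rw [hg, integral_indicator measurableSet_Iic]
    rw [hrepr]
    refine ContinuousAt.neg ?_
    have hne : ∀ᵐ x ∂ν, x ≠ a := by
      rw [ae_iff]
      simpa using measure_singleton a
    refine tendsto_integral_filter_of_dominated_convergence (fun x => |x|)
      (Eventually.of_forall fun t =>
        (measurable_id.indicator measurableSet_Iic).aestronglyMeasurable)
      (Eventually.of_forall fun t => Eventually.of_forall fun x => ?_)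
      (by simpa [Real.norm_eq_abs] using hInt1.norm) ?_
    · by_cases h : x ∈ Iic t <;> simp [h, Set.indicator_apply, abs_nonneg]
    · filter_upwards [hne] with x hx
      rcases lt_or_gt_of_ne hx with hlt | hgt
      · have hev : ∀ᶠ t in 𝓝 a, (Iic t).indicator (fun x => x) x = x := by
          filter_upwards [eventually_gt_nhds hlt] with t ht
          simp [Set.indicator_apply, ht.le]
        have : (Iic a).indicator (fun x => x) x = x := by
          simp [Set.indicator_apply, hlt.le]
        rw [this]
        exact Tendsto.congr' (EventuallyEq.symm hev) tendsto_const_nhds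
      · have hev : ∀ᶠ t in 𝓝 a, (Iic t).indicator (fun x => x) x = 0 := by
          filter_upwards [eventually_lt_nhds hgt] with t ht
          simp [Set.indicator_apply, not_le.2 ht]
        have : (Iic a).indicator (fun x => x) x = 0 := by
          simp [Set.indicator_apply, not_le.2 hgt]
        rw [this]
        exact Tendsto.congr' (EventuallyEq.symm hev) tendsto_const_nhds
  have hg_nonneg : ∀ t, 0 ≤ g t := fun t => by
    rw [hg_eq t]; exact gm_nonneg ν hInt1 hmean t
  have hg_meas : Measurable g := hg_cont.measurable
  set w : ℝ → ℝ≥0∞ := fun t => ENNReal.ofReal (g t) with hw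
  have hw_meas : Measurable w := ENNReal.measurable_ofReal.comp hg_meas
  have hgInt : ∀ a : ℝ, IntegrableOn g (Iic a) volume := by
    intro a
    have h1 : IntegrableOn (fun t => -∫ x in Iio t, x ∂ν) (Iio (a+1)) volume :=
      (fubini_step ν hInt1 hInt2 (a+1)).1
    have h2 : IntegrableOn g (Iio (a+1)) volume := by
      refine h1.congr_fun ?_ measurableSet_Iio
      intro x _; exact (hg_eq x).symm
    exact h2.mono_set fun x hx => mem_Iio.mpr (lt_of_le_of_lt (mem_Iic.mp hx) (by linarith))
  have hνIic : ∀ a : ℝ, ν (Iic a) = ENNReal.ofReal (∫ t in Iic a, g t ∂volume) := by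
    intro a
    have h1 : (ν (Iic a)).toReal = ∫ t in Iic a, g t ∂volume := by
      rw [hF a, show (fun t => -∫ x in Iio t, x ∂ν) = g from funext fun t => (hg_eq t).symm]
      exact setIntegral_congr_set Iio_ae_eq_Iic
    rw [← h1, ENNReal.ofReal_toReal (measure_ne_top ν _)]
  have hdens : ν = volume.withDensity w := by
    refine Measure.ext_of_Iic ν (volume.withDensity w) fun a => ?_
    rw [hνIic a, withDensity_apply _ measurableSet_Iic,
      ← ofReal_integral_eq_lintegral_ofReal (hgInt a)
        (Eventually.of_forall fun t => hg_nonneg t)]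
  
-- integrability of x * g x and set integral identity
  have hw' : w = fun t => (((g t).toNNReal : ℝ≥0) : ℝ≥0∞) := rfl
  have hgn_meas : Measurable fun t => (g t).toNNReal := hg_meas.real_toNNReal
  have hInt_xg : Integrable (fun x => g x * x) volume := by
    have h : Integrable (fun x => x) (volume.withDensity w) := hdens ▸ hInt1
    rw [hw'] at h
    have h2 := (integrable_withDensity_iff_integrable_smul hgn_meas).mp h
    refine h2.congr (Eventually.of_forall fun x => ?_)
    simp [NNReal.smul_def, Real.coe_toNNReal _ (hg_nonneg x)]
  have hsetint : ∀ t : ℝ, ∫ x in Iic t, x ∂ν = ∫ x in Iic t, g x * x ∂volume := by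
    intro t
    rw [hdens, hw', restrict_withDensity measurableSet_Iic,
      integral_withDensity_eq_integral_smul hgn_meas]
    refine integral_congr_ae (Eventually.of_forall fun x => ?_)
    simp [NNReal.smul_def, Real.coe_toNNReal _ (hg_nonneg x)]
  have hφ_cont : Continuous (fun x : ℝ => g x * x) := hg_cont.mul continuous_id
  -- FTC: derivative of g
  have hderiv : ∀ a : ℝ, HasDerivAt g (-(g a * a)) a := by
    intro a
    have h0 : ∀ u : ℝ, (∫ x in Iic u, g x * x ∂volume)
        = (∫ x in Iic 0, g x * x ∂volume) + ∫ x in (0:ℝ)..u, g x * x ∂volume := by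
      intro u
      have := intervalIntegral.integral_Iic_sub_Iic
        (hInt_xg.integrableOn : IntegrableOn (fun x => g x * x) (Iic (0:ℝ)) volume)
        (hInt_xg.integrableOn : IntegrableOn (fun x => g x * x) (Iic u) volume)
      linarith
    have hD : HasDerivAt (fun u => ∫ x in (0:ℝ)..u, g x * x ∂volume) (g a * a) a :=
      intervalIntegral.integral_hasDerivAt_right hInt_xg.intervalIntegrable
        hφ_cont.stronglyMeasurable.stronglyMeasurableAtFilter hφ_cont.continuousAt
    have hD2 : HasDerivAt
        (fun u => (∫ x in Iic 0, g x * x ∂volume) + ∫ x in (0:ℝ)..u, g x * x ∂volume)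
        (g a * a) a := hD.const_add _
    have hgrepr : ∀ u, g u =
        -((∫ x in Iic 0, g x * x ∂volume) + ∫ x in (0:ℝ)..u, g x * x ∂volume) := by
      intro u
      rw [← h0 u, ← hsetint u]
    exact hD2.neg.congr_of_eventuallyEq (Eventually.of_forall fun u => hgrepr u)
  -- the ODE: g t * exp(t^2/2) is constant
  have hconst : ∀ t : ℝ, g t * Real.exp (t ^ 2 / 2) = g 0 := by
    have hdiff : ∀ a : ℝ, HasDerivAt (fun t => g t * Real.exp (t ^ 2 / 2)) 0 a := by
      intro a
      have h1 : HasDerivAt (fun t : ℝ => t ^ 2 / 2) a a := by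
        have := (hasDerivAt_pow 2 a).div_const 2
        simpa using this
      have he : HasDerivAt (fun t : ℝ => Real.exp (t ^ 2 / 2))
          (Real.exp (a ^ 2 / 2) * a) a := h1.exp
      have : HasDerivAt (fun t => g t * Real.exp (t ^ 2 / 2))
          (-(g a * a) * Real.exp (a ^ 2 / 2) + g a * (Real.exp (a ^ 2 / 2) * a)) a :=
        (hderiv a).mul he
      convert this using 1
      ring
    intro t
    have := is_const_of_deriv_eq_zero (f := fun t => g t * Real.exp (t ^ 2 / 2))
      (fun a => (hdiff a).differentiableAt) (fun a => (hdiff a).deriv) t 0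
    simpa using this
  have hg_form : ∀ t, g t = g 0 * Real.exp (-(1/2) * t ^ 2) := by
    intro t
    have h2 := hconst t
    have h3 : Real.exp (-(1/2) * t ^ 2) = (Real.exp (t ^ 2 / 2))⁻¹ := by
      rw [← Real.exp_neg]
      congr 1
      ring
    rw [← h2, h3, mul_assoc, mul_inv_cancel₀ (Real.exp_ne_zero _), mul_one]
  -- total mass
  have hgauss_int : Integrable (fun t : ℝ => Real.exp (-(1/2) * t ^ 2)) volume :=
    integrable_exp_neg_mul_sq (by norm_num)
  have hform : g = fun t => g 0 * Real.exp (-(1/2) * t ^ 2) := funext hg_form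
  have hint_g : Integrable g volume := by
    rw [hform]
    exact hgauss_int.const_mul _
  have hmass : ENNReal.ofReal (∫ t, g t ∂volume) = 1 := by
    have h1 : ν univ = 1 := measure_univ
    rw [hdens, withDensity_apply _ MeasurableSet.univ, Measure.restrict_univ] at h1
    rw [ofReal_integral_eq_lintegral_ofReal hint_g (Eventually.of_forall hg_nonneg)]
    exact h1
  have hval : (∫ t, g t ∂volume) = g 0 * Real.sqrt (2 * π) := by
    have h2 : (∫ t, g t ∂volume) = ∫ t, g 0 * Real.exp (-(1/2) * t ^ 2) ∂volume :=
      integral_congr_ae (Eventually.of_forall fun t => hg_form t)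
    rw [h2, integral_const_mul, integral_gaussian, show π / (1/2 : ℝ) = 2 * π by ring]
  have hg0 : g 0 = (Real.sqrt (2 * π))⁻¹ := by
    have h1 : g 0 * Real.sqrt (2 * π) = 1 := by
      rw [hval] at hmass
      exact ENNReal.ofReal_eq_one.mp hmass
    have hs : Real.sqrt (2 * π) ≠ 0 := by
      refine ne_of_gt (Real.sqrt_pos.mpr ?_)
      positivity
    have h2 := eq_div_of_mul_eq hs h1
    rwa [one_div] at h2
  -- conclusion
  rw [hdens, gaussianReal_of_var_ne_zero 0 one_ne_zero]
  congr 1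
  funext x
  show ENNReal.ofReal (g x) = gaussianPDF 0 1 x
  rw [gaussianPDF]
  congr 1
  rw [hg_form x, hg0]
  simp only [gaussianPDFReal, NNReal.coe_one, mul_one, sub_zero]
  congr 1
  ring


theorem stmt_9 {Ω : Type*} [MeasurableSpace Ω] (μ : Measure Ω) [IsProbabilityMeasure μ]
    (X : Ω → ℝ) (hXmeas : Measurable X)
    (hX1 : Integrable X μ) (hX2 : Integrable (fun ω => (X ω) ^ 2) μ)
    (hmean : ∫ ω, X ω ∂μ = 0) (hvar : ∫ ω, (X ω) ^ 2 ∂μ = 1)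
    (hfix : ∀ s : ℝ, ∫ ω, (if X ω ≤ s then X ω * (X ω - s) else 0) ∂μ
      = (μ {ω | X ω ≤ s}).toReal) :
    Measure.map X μ = gaussianReal 0 1 := by
  haveI : IsProbabilityMeasure (Measure.map X μ) :=
    Measure.isProbabilityMeasure_map hXmeas.aemeasurable
  have hInt1 : Integrable (fun x => x) (Measure.map X μ) := by
    rw [integrable_map_measure measurable_id'.aestronglyMeasurable hXmeas.aemeasurable]
    simpa [Function.comp_def] using hX1
  have hInt2 : Integrable (fun x => x ^ 2) (Measure.map X μ) := by
    rw [integrable_map_measure (measurable_id'.pow_const 2).aestronglyMeasurable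
      hXmeas.aemeasurable]
    simpa [Function.comp_def] using hX2
  have hmean' : ∫ x, x ∂(Measure.map X μ) = 0 := by
    rw [integral_map hXmeas.aemeasurable measurable_id'.aestronglyMeasurable]
    exact hmean
  have hfix' : ∀ s : ℝ, ∫ x, (if x ≤ s then x * (x - s) else 0) ∂(Measure.map X μ)
      = ((Measure.map X μ) (Iic s)).toReal := by
    intro s
    have hm : Measurable fun x : ℝ => if x ≤ s then x * (x - s) else 0 :=
      Measurable.ite measurableSet_Iic
        (measurable_id.mul (measurable_id.sub measurable_const)) measurable_const
    rw [integral_map hXmeas.aemeasurable hm.aestronglyMeasurable,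
      Measure.map_apply hXmeas measurableSet_Iic]
    exact hfix s
  exact key (Measure.map X μ) hInt1 hInt2 hmean' hfix'
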